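/- arXiv:0806.2375 — 2 statements merged into one kernel-verified Lean document; each statement's English description precedes it below -/
import Mathlib

section
/- If S is a sublattice of an integral lattice L in Euclidean space satisfying the RSSD condition 2L ⊆ S + ann(S), where ann(S) = {x ∈ L ⊗ ℝ : ⟨x, s⟩ = 0 for all s ∈ S}, then the orthogonal involution t_S which acts as −1 on S ⊗ ℝ and +1 on ann(S) maps L into L. -/
/-- If `S` is a sublattice of an integral lattice `L` in Euclidean space
satisfying the RSSD condition `2L ⊆ S + ann(S)`, then the orthogonal involution `t`
which is `-1` on the ℝ-span of `S` and `+1` on `ann(S)` maps `L` into `L`. -/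
theorem rssd_involution_preserves_lattice
    {V : Type*} [NormedAddCommGroup V] [InnerProductSpace ℝ V]
    (L S : Submodule ℤ V) (hSL : S ≤ L)
    (hInt : ∀ x ∈ L, ∀ y ∈ L, ∃ n : ℤ, (inner ℝ x y : ℝ) = n)
    (t : V →ₗ[ℝ] V)
    (htS : ∀ s ∈ Submodule.span ℝ (S : Set V), t s = -s)
    (htAnn : ∀ a : V, (∀ s ∈ S, (inner ℝ a s : ℝ) = 0) → t a = a)
    (hRSSD : ∀ x ∈ L, ∃ s ∈ S, ∃ a : V,
      (∀ u ∈ S, (inner ℝ a u : ℝ) = 0) ∧ (2 : ℤ) • x = s + a) :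
    ∀ x ∈ L, t x ∈ L := by
  intro x hx
  obtain ⟨s, hs, a, ha, heq⟩ := hRSSD x hx
  have hts : t s = -s := htS s (Submodule.subset_span hs)
  have hta : t a = a := htAnn a ha
  have h2 : ((2 : ℤ) : ℝ) • x = s + a := by
    rw [Int.cast_smul_eq_zsmul]; exact heq
  have h2' : t (((2 : ℤ) : ℝ) • x) = -s + a := by
    rw [h2, map_add, hts, hta]
  have htx : (2 : ℝ) • t x = (2 : ℝ) • (x - s) := by
    have h3 : (2 : ℝ) • t x = -s + a := by
      rw [← h2']; push_cast; rw [map_smul]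
    have ha2 : a = ((2:ℤ):ℝ) • x - s := by rw [h2]; abel
    push_cast at ha2
    rw [h3, ha2]; module
  have : t x = x - s := smul_right_injective V (by norm_num) htx
  rw [this]
  exact L.sub_mem hx (hSL hs)
end

section
/- The lattice A2 ⊗ E8 (tensor product of the A2 and E8 root lattices with the product bilinear form) is an even rootless lattice of rank 16 with discriminant group isomorphic to (ℤ/3ℤ)^8 and minimal norm 4. -/
set_option maxHeartbeats 1000000

open Matrix Kronecker

/-- A Gram matrix for the `A2` root lattice. -/
def A2Gram : Matrix (Fin 2) (Fin 2) ℤ := !![2, -1; -1, 2]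

/-- A Gram matrix for the `E8` root lattice. -/
def E8Gram : Matrix (Fin 8) (Fin 8) ℤ :=
  !![ 2,-1, 0, 0, 0, 0, 0, 0;
     -1, 2,-1, 0, 0, 0, 0, 0;
      0,-1, 2,-1, 0, 0, 0,-1;
      0, 0,-1, 2,-1, 0, 0, 0;
      0, 0, 0,-1, 2,-1, 0, 0;
      0, 0, 0, 0,-1, 2,-1, 0;
      0, 0, 0, 0, 0,-1, 2, 0;
      0, 0,-1, 0, 0, 0, 0, 2]

/-- Gram matrix of the tensor product lattice `A2 ⊗ E8`. -/
def A2E8Gram : Matrix (Fin 2 × Fin 8) (Fin 2 × Fin 8) ℤ := A2Gram ⊗ₖ E8Gram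

/-- Integer inverse of `E8Gram`. -/
def Einv : Matrix (Fin 8) (Fin 8) ℤ :=
  !![ 4, 7,10, 8, 6, 4, 2, 5;
      7,14,20,16,12, 8, 4,10;
     10,20,30,24,18,12, 6,15;
      8,16,24,20,15,10, 5,12;
      6,12,18,15,12, 8, 4, 9;
      4, 8,12,10, 8, 6, 3, 6;
      2, 4, 6, 5, 4, 3, 2, 3;
      5,10,15,12, 9, 6, 3, 8]

lemma e8_expand (x : Fin 8 → ℤ) : x ⬝ᵥ E8Gram.mulVec x =
    2*(x 0^2 + x 1^2 + x 2^2 + x 3^2 + x 4^2 + x 5^2 + x 6^2 + x 7^2)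
      - 2*(x 0 * x 1 + x 1 * x 2 + x 2 * x 3 + x 3 * x 4 + x 4 * x 5 + x 5 * x 6 + x 6 * x 7
        + x 2 * x 7 - x 6 * x 7) := by
  simp only [Matrix.mulVec, dotProduct, Fin.sum_univ_eight, show E8Gram 0 0 = 2 from rfl, show E8Gram 0 1 = (-1) from rfl, show E8Gram 0 2 = 0 from rfl, show E8Gram 0 3 = 0 from rfl, show E8Gram 0 4 = 0 from rfl, show E8Gram 0 5 = 0 from rfl, show E8Gram 0 6 = 0 from rfl, show E8Gram 0 7 = 0 from rfl, show E8Gram 1 0 = (-1) from rfl, show E8Gram 1 1 = 2 from rfl, show E8Gram 1 2 = (-1) from rfl, show E8Gram 1 3 = 0 from rfl, show E8Gram 1 4 = 0 from rfl, show E8Gram 1 5 = 0 from rfl, show E8Gram 1 6 = 0 from rfl, show E8Gram 1 7 = 0 from rfl, show E8Gram 2 0 = 0 from rfl, show E8Gram 2 1 = (-1) from rfl, show E8Gram 2 2 = 2 from rfl, show E8Gram 2 3 = (-1) from rfl, show E8Gram 2 4 = 0 from rfl, show E8Gram 2 5 = 0 from rfl, show E8Gram 2 6 = 0 from rfl, show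 E8Gram 2 7 = (-1) from rfl, show E8Gram 3 0 = 0 from rfl, show E8Gram 3 1 = 0 from rfl, show E8Gram 3 2 = (-1) from rfl, show E8Gram 3 3 = 2 from rfl, show E8Gram 3 4 = (-1) from rfl, show E8Gram 3 5 = 0 from rfl, show E8Gram 3 6 = 0 from rfl, show E8Gram 3 7 = 0 from rfl, show E8Gram 4 0 = 0 from rfl, show E8Gram 4 1 = 0 from rfl, show E8Gram 4 2 = 0 from rfl, show E8Gram 4 3 = (-1) from rfl, show E8Gram 4 4 = 2 from rfl, show E8Gram 4 5 = (-1) from rfl, show E8Gram 4 6 = 0 from rfl, show E8Gram 4 7 = 0 from rfl, show E8Gram 5 0 = 0 from rfl, show E8Gram 5 1 = 0 from rfl, show E8Gram 5 2 = 0 from rfl, show E8Gram 5 3 = 0 from rfl, show E8Gram 5 4 = (-1) from rfl, show E8Gram 5 5 = 2 from rfl, show E8Gram 5 6 = (-1) from rfl, show E8Gram 5 7 = 0 from rfl, show E8Gram 6 0 = 0 from rfl, show E8Gram 6 1 = 0 from rfl, show E8Gram 6 2 = 0 from rfl, show E8Gram 6 3 = 0 from rfl, show E8Gram 6 4 = 0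 from rfl, show E8Gram 6 5 = (-1) from rfl, show E8Gram 6 6 = 2 from rfl, show E8Gram 6 7 = 0 from rfl, show E8Gram 7 0 = 0 from rfl, show E8Gram 7 1 = 0 from rfl, show E8Gram 7 2 = (-1) from rfl, show E8Gram 7 3 = 0 from rfl, show E8Gram 7 4 = 0 from rfl, show E8Gram 7 5 = 0 from rfl, show E8Gram 7 6 = 0 from rfl, show E8Gram 7 7 = 2 from rfl]
  ring

lemma e8_even (x : Fin 8 → ℤ) : Even (x ⬝ᵥ E8Gram.mulVec x) := by
  rw [e8_expand]
  exact ⟨(x 0^2 + x 1^2 + x 2^2 + x 3^2 + x 4^2 + x 5^2 + x 6^2 + x 7^2)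
      - (x 0 * x 1 + x 1 * x 2 + x 2 * x 3 + x 3 * x 4 + x 4 * x 5 + x 5 * x 6 + x 6 * x 7
        + x 2 * x 7 - x 6 * x 7), by ring⟩

lemma e8_sos (x : Fin 8 → ℤ) : 840 * (x ⬝ᵥ E8Gram.mulVec x) =
    420*(2*x 0 - x 1)^2 + 140*(3*x 1 - 2*x 2)^2 + 70*(4*x 2 - 3*x 3 - 3*x 7)^2
    + 42*(5*x 3 - 4*x 4 - 3*x 7)^2 + 28*(6*x 4 - 5*x 5 - 3*x 7)^2
    + 20*(7*x 5 - 6*x 6 - 3*x 7)^2 + 15*(8*x 6 - 3*x 7)^2 + 105*(x 7)^2 := by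
  rw [e8_expand]; ring

lemma e8_zero_of_nonpos (x : Fin 8 → ℤ) (h : x ⬝ᵥ E8Gram.mulVec x ≤ 0) : x = 0 := by
  have hs := e8_sos x
  have n0 := sq_nonneg (2*x 0 - x 1)
  have n1 := sq_nonneg (3*x 1 - 2*x 2)
  have n2 := sq_nonneg (4*x 2 - 3*x 3 - 3*x 7)
  have n3 := sq_nonneg (5*x 3 - 4*x 4 - 3*x 7)
  have n4 := sq_nonneg (6*x 4 - 5*x 5 - 3*x 7)
  have n5 := sq_nonneg (7*x 5 - 6*x 6 - 3*x 7)
  have n6 := sq_nonneg (8*x 6 - 3*x 7)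
  have n7 := sq_nonneg (x 7)
  have z7 : x 7 ^ 2 = 0 := by nlinarith
  have z6 : (8*x 6 - 3*x 7) ^ 2 = 0 := by nlinarith
  have z5 : (7*x 5 - 6*x 6 - 3*x 7) ^ 2 = 0 := by nlinarith
  have z4 : (6*x 4 - 5*x 5 - 3*x 7) ^ 2 = 0 := by nlinarith
  have z3 : (5*x 3 - 4*x 4 - 3*x 7) ^ 2 = 0 := by nlinarith
  have z2 : (4*x 2 - 3*x 3 - 3*x 7) ^ 2 = 0 := by nlinarith
  have z1 : (3*x 1 - 2*x 2) ^ 2 = 0 := by nlinarith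
  have z0 : (2*x 0 - x 1) ^ 2 = 0 := by nlinarith
  rw [pow_eq_zero_iff (by norm_num : 2 ≠ 0)] at z0 z1 z2 z3 z4 z5 z6 z7
  funext i
  fin_cases i <;> simp <;> omega

lemma e8_two_le (x : Fin 8 → ℤ) (hx : x ≠ 0) : 2 ≤ x ⬝ᵥ E8Gram.mulVec x := by
  obtain ⟨c, hc⟩ := e8_even x
  have hpos : 0 < x ⬝ᵥ E8Gram.mulVec x := by
    rcases lt_or_ge 0 (x ⬝ᵥ E8Gram.mulVec x) with h | h
    · exact h
    · exact absurd (e8_zero_of_nonpos x h) hx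
  omega

lemma e8_nonneg (x : Fin 8 → ℤ) : 0 ≤ x ⬝ᵥ E8Gram.mulVec x := by
  rcases eq_or_ne x 0 with rfl | hx
  · simp
  · linarith [e8_two_le x hx]

lemma tensor_eq (v : Fin 2 × Fin 8 → ℤ) :
    v ⬝ᵥ A2E8Gram.mulVec v =
      (fun j => v (0, j)) ⬝ᵥ E8Gram.mulVec (fun j => v (0, j))
      + (fun j => v (1, j)) ⬝ᵥ E8Gram.mulVec (fun j => v (1, j))
      + ((fun j => v (0, j)) - (fun j => v (1, j))) ⬝ᵥ
          E8Gram.mulVec ((fun j => v (0, j)) - (fun j => v (1, j))) := by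
  rw [e8_expand, e8_expand, e8_expand]
  simp only [Pi.sub_apply]
  simp only [A2E8Gram, Matrix.mulVec, dotProduct, Fintype.sum_prod_type, Fin.sum_univ_eight,
    Fin.sum_univ_two, Matrix.kroneckerMap_apply,
    show A2Gram 0 0 = 2 from rfl, show A2Gram 0 1 = (-1) from rfl,
    show A2Gram 1 0 = (-1) from rfl, show A2Gram 1 1 = 2 from rfl,
    show E8Gram 0 0 = 2 from rfl, show E8Gram 0 1 = (-1) from rfl, show E8Gram 0 2 = 0 from rfl, show E8Gram 0 3 = 0 from rfl, show E8Gram 0 4 = 0 from rfl, show E8Gram 0 5 = 0 from rfl, show E8Gram 0 6 = 0 from rfl, show E8Gram 0 7 = 0 from rfl, show E8Gram 1 0 = (-1) from rfl, show E8Gram 1 1 = 2 from rfl, show E8Gram 1 2 = (-1) from rfl, show E8Gram 1 3 = 0 from rfl, show E8Gram 1 4 = 0 from rfl, show E8Gram 1 5 = 0 from rfl, show E8Gram 1 6 = 0 from rfl, show E8Gram 1 7 = 0 from rfl, show E8Gram 2 0 = 0 from rfl, show E8Gram 2 1 = (-1) from rfl, show E8Gram 2 2 = 2 from rfl, show E8Gram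 2 3 = (-1) from rfl, show E8Gram 2 4 = 0 from rfl, show E8Gram 2 5 = 0 from rfl, show E8Gram 2 6 = 0 from rfl, show E8Gram 2 7 = (-1) from rfl, show E8Gram 3 0 = 0 from rfl, show E8Gram 3 1 = 0 from rfl, show E8Gram 3 2 = (-1) from rfl, show E8Gram 3 3 = 2 from rfl, show E8Gram 3 4 = (-1) from rfl, show E8Gram 3 5 = 0 from rfl, show E8Gram 3 6 = 0 from rfl, show E8Gram 3 7 = 0 from rfl, show E8Gram 4 0 = 0 from rfl, show E8Gram 4 1 = 0 from rfl, show E8Gram 4 2 = 0 from rfl, show E8Gram 4 3 = (-1) from rfl, show E8Gram 4 4 = 2 from rfl, show E8Gram 4 5 = (-1) from rfl, show E8Gram 4 6 = 0 from rfl, show E8Gram 4 7 = 0 from rfl, show E8Gram 5 0 = 0 from rfl, show E8Gram 5 1 = 0 from rfl, show E8Gram 5 2 = 0 from rfl, show E8Gram 5 3 = 0 from rfl, show E8Gram 5 4 = (-1) from rfl, show E8Gram 5 5 = 2 from rfl, show E8Gram 5 6 = (-1) from rfl, show E8Gram 5 7 = 0 from rfl, show E8Gram 6 0 = 0 from rfl,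 show E8Gram 6 1 = 0 from rfl, show E8Gram 6 2 = 0 from rfl, show E8Gram 6 3 = 0 from rfl, show E8Gram 6 4 = 0 from rfl, show E8Gram 6 5 = (-1) from rfl, show E8Gram 6 6 = 2 from rfl, show E8Gram 6 7 = 0 from rfl, show E8Gram 7 0 = 0 from rfl, show E8Gram 7 1 = 0 from rfl, show E8Gram 7 2 = (-1) from rfl, show E8Gram 7 3 = 0 from rfl, show E8Gram 7 4 = 0 from rfl, show E8Gram 7 5 = 0 from rfl, show E8Gram 7 6 = 0 from rfl, show E8Gram 7 7 = 2 from rfl]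
  ring

/-- `A2 ⊗ I` factor. -/
def CM : Matrix (Fin 2 × Fin 8) (Fin 2 × Fin 8) ℤ :=
  fun p q => if p.2 = q.2 then A2Gram p.1 q.1 else 0

/-- `I ⊗ E8` factor. -/
def BM : Matrix (Fin 2 × Fin 8) (Fin 2 × Fin 8) ℤ :=
  fun p q => if p.1 = q.1 then E8Gram p.2 q.2 else 0

/-- `I ⊗ E8⁻¹`. -/
def BMinv : Matrix (Fin 2 × Fin 8) (Fin 2 × Fin 8) ℤ :=
  fun p q => if p.1 = q.1 then Einv p.2 q.2 else 0

lemma EmulEinv : E8Gram * Einv = 1 := by decide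

lemma myFactorization : A2E8Gram = CM * BM := by
  ext ⟨i, j⟩ ⟨k, l⟩
  rw [Matrix.mul_apply, Fintype.sum_prod_type]
  simp [A2E8Gram, CM, BM, Matrix.kroneckerMap_apply, ite_mul, mul_ite, mul_comm,
    Finset.sum_ite_eq, Finset.sum_ite_eq']

lemma BmulBinv : BM * BMinv = 1 := by
  ext ⟨i, j⟩ ⟨k, l⟩
  rw [Matrix.mul_apply, Fintype.sum_prod_type]
  have hE : ∑ n, E8Gram j n * Einv n l = (1 : Matrix (Fin 8) (Fin 8) ℤ) j l := by
    rw [← Matrix.mul_apply, EmulEinv]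
  simp [BM, BMinv, ite_mul, mul_ite, Finset.sum_ite_eq, Finset.sum_ite_eq',
    Matrix.one_apply, Prod.ext_iff, hE]
  split_ifs <;> simp_all

lemma BM_surj : Function.Surjective BM.mulVecLin := by
  intro y
  refine ⟨BMinv.mulVec y, ?_⟩
  rw [Matrix.mulVecLin_apply, Matrix.mulVec_mulVec, BmulBinv, Matrix.one_mulVec]

lemma range_eq_rangeC :
    LinearMap.range A2E8Gram.mulVecLin = LinearMap.range CM.mulVecLin := by
  rw [myFactorization, Matrix.mulVecLin_mul]
  exact LinearMap.range_comp_of_range_eq_top _ (LinearMap.range_eq_top.2 BM_surj)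

/-- The discriminant map. -/
def phi : (Fin 2 × Fin 8 → ℤ) →ₗ[ℤ] (Fin 8 → ZMod 3) where
  toFun v := fun j => ((v (0, j) : ℤ) : ZMod 3) - ((v (1, j) : ℤ) : ZMod 3)
  map_add' a b := by funext j; simp [Pi.add_apply]; push_cast; ring
  map_smul' c a := by
    funext j
    simp [Pi.smul_apply, smul_eq_mul, zsmul_eq_mul]
    push_cast
    ring

lemma CM_mulVec_apply (w : Fin 2 × Fin 8 → ℤ) (i : Fin 2) (j : Fin 8) :
    CM.mulVec w (i, j) = A2Gram i 0 * w (0, j) + A2Gram i 1 * w (1, j) := by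
  rw [Matrix.mulVec, dotProduct, Fintype.sum_prod_type]
  simp [CM, Fin.sum_univ_two, ite_mul, Finset.sum_ite_eq, Finset.sum_ite_eq']

lemma ker_phi : LinearMap.ker phi = LinearMap.range CM.mulVecLin := by
  ext v
  constructor
  · intro hv
    have hv' : ∀ j : Fin 8, ((v (0, j) - v (1, j) : ℤ) : ZMod 3) = 0 := by
      intro j
      have := congrFun (LinearMap.mem_ker.1 hv) j
      push_cast
      simpa [phi, sub_eq_zero] using this
    have hdvd : ∀ j : Fin 8, (3 : ℤ) ∣ (v (0, j) - v (1, j)) := by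
      intro j
      exact (ZMod.intCast_zmod_eq_zero_iff_dvd _ 3).1 (hv' j)
    choose d hd using hdvd
    refine ⟨fun p => if p.1 = 0 then v (0, p.2) - d p.2 else v (1, p.2) + d p.2, ?_⟩
    funext p
    obtain ⟨i, j⟩ := p
    rw [Matrix.mulVecLin_apply, CM_mulVec_apply]
    have hdj := hd j
    fin_cases i <;>
      simp [show A2Gram 0 0 = 2 from rfl, show A2Gram 0 1 = (-1) from rfl,
        show A2Gram 1 0 = (-1) from rfl, show A2Gram 1 1 = 2 from rfl] <;>
      linarith
  · rintro ⟨w, rfl⟩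
    rw [LinearMap.mem_ker]
    funext j
    rw [Matrix.mulVecLin_apply]
    show ((CM.mulVec w (0, j) : ℤ) : ZMod 3) - ((CM.mulVec w (1, j) : ℤ) : ZMod 3) = 0
    rw [CM_mulVec_apply, CM_mulVec_apply]
    simp only [show A2Gram 0 0 = 2 from rfl, show A2Gram 0 1 = (-1) from rfl,
      show A2Gram 1 0 = (-1) from rfl, show A2Gram 1 1 = 2 from rfl]
    have h3 : (3 : ZMod 3) = 0 := by decide
    push_cast
    linear_combination ((w (0, j) : ZMod 3) - (w (1, j) : ZMod 3)) * h3

lemma e8_neg (y : Fin 8 → ℤ) : (-y) ⬝ᵥ E8Gram.mulVec (-y) = y ⬝ᵥ E8Gram.mulVec y := by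
  rw [e8_expand, e8_expand]
  simp only [Pi.neg_apply]
  ring

lemma e8_tri (x y : Fin 8 → ℤ) (h : ¬ (x = 0 ∧ y = 0)) :
    4 ≤ x ⬝ᵥ E8Gram.mulVec x + y ⬝ᵥ E8Gram.mulVec y + (x - y) ⬝ᵥ E8Gram.mulVec (x - y) := by
  rcases eq_or_ne x 0 with rfl | hx
  · have hy : y ≠ 0 := by tauto
    have h1 := e8_two_le y hy
    have h2 : (0 - y) ⬝ᵥ E8Gram.mulVec (0 - y) = y ⬝ᵥ E8Gram.mulVec y := by
      rw [zero_sub, e8_neg]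
    have h0 : (0 : Fin 8 → ℤ) ⬝ᵥ E8Gram.mulVec 0 = 0 := by simp
    linarith
  · rcases eq_or_ne y 0 with rfl | hy
    · have h1 := e8_two_le x hx
      have h0 : (0 : Fin 8 → ℤ) ⬝ᵥ E8Gram.mulVec 0 = 0 := by simp
      rw [sub_zero]
      linarith
    · have h1 := e8_two_le x hx
      have h2 := e8_two_le y hy
      have h3 := e8_nonneg (x - y)
      linarith

lemma phi_surj : Function.Surjective phi := by
  intro t
  refine ⟨fun p => if p.1 = 0 then ((t p.2).val : ℤ) else 0, ?_⟩
  funext j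
  show ((((t j).val : ℤ) : ZMod 3) - ((0 : ℤ) : ZMod 3)) = t j
  simp [ZMod.natCast_val, ZMod.intCast_cast, ZMod.cast_id]

/-- The lattice `A2 ⊗ E8` is an even rootless lattice of rank 16 with
discriminant group isomorphic to `(ℤ/3ℤ)^8` and minimal norm `4`. -/
theorem A2_tensor_E8_properties :
    Fintype.card (Fin 2 × Fin 8) = 16 ∧
    (∀ v : Fin 2 × Fin 8 → ℤ, Even (v ⬝ᵥ A2E8Gram.mulVec v)) ∧
    (∀ v : Fin 2 × Fin 8 → ℤ, v ≠ 0 → 4 ≤ v ⬝ᵥ A2E8Gram.mulVec v) ∧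
    (∃ v : Fin 2 × Fin 8 → ℤ, v ⬝ᵥ A2E8Gram.mulVec v = 4) ∧
    (∀ v : Fin 2 × Fin 8 → ℤ, v ⬝ᵥ A2E8Gram.mulVec v ≠ 2) ∧
    Nonempty (((Fin 2 × Fin 8 → ℤ) ⧸ LinearMap.range A2E8Gram.mulVecLin)
      ≃+ (Fin 8 → ZMod 3)) := by
  have min4 : ∀ v : Fin 2 × Fin 8 → ℤ, v ≠ 0 → 4 ≤ v ⬝ᵥ A2E8Gram.mulVec v := by
    intro v hv
    rw [tensor_eq]
    refine e8_tri _ _ ?_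
    rintro ⟨h0, h1⟩
    apply hv
    funext p
    obtain ⟨i, j⟩ := p
    fin_cases i
    · exact congrFun h0 j
    · exact congrFun h1 j
  refine ⟨by decide, ?_, min4, ?_, ?_, ?_⟩
  · intro v
    rw [tensor_eq]
    exact ((e8_even _).add (e8_even _)).add (e8_even _)
  · exact ⟨fun p => if p = (0, 0) then 1 else 0, by decide⟩
  · intro v
    rcases eq_or_ne v 0 with rfl | hv
    · simp
    · have := min4 v hv
      omega
  · refine ⟨AddEquiv.trans ?_ (phi.quotKerEquivOfSurjective phi_surj).toAddEquiv⟩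
    exact (Submodule.quotEquivOfEq _ _ (range_eq_rangeC.trans ker_phi.symm)).toAddEquiv
end
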